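/- arXiv:0806.1030 — 3 statements merged into one kernel-verified Lean document; each statement's English description precedes it below -/
import Mathlib

section
/- Let X₁, X₂, … be i.i.d. real random variables and S_ℓ = X₁ + ⋯ + X_ℓ. For any m ≥ 1 and any c > 0, P[S_m ≥ c and S_ℓ ≥ 0 for all ℓ = 1,…,m] ≥ (1/m) · P[S_m ≥ c]. -/
open MeasureTheory ProbabilityTheory Finset
open Fin.NatCast

lemma cycle_lemma {m : ℕ} [NeZero m] (hm : 1 ≤ m) (y : Fin m → ℝ) {c : ℝ} (hc : 0 < c)
    (hy : c ≤ ∑ i, y i) :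
    ∃ k < m, ∀ ℓ, 1 ≤ ℓ → ℓ ≤ m → 0 ≤ ∑ i ∈ Finset.range ℓ, y ↑(k + i) := by
  set f : ℕ → ℝ := fun j => y ↑j with hf_def
  set S : ℕ → ℝ := fun j => ∑ i ∈ Finset.range j, f i with hS_def
  have hf : ∀ j, f (m + j) = f j := by
    intro j
    simp [hf_def, Nat.cast_add, Fin.natCast_self]
  have hshift : ∀ k ℓ, S (k + ℓ) = S k + ∑ i ∈ Finset.range ℓ, f (k + i) :=
    fun k ℓ => Finset.sum_range_add f k ℓ
  have hSm : c ≤ S m := by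
    have : ∑ i : Fin m, y ↑(i : ℕ) = ∑ i ∈ Finset.range m, f i :=
      Fin.sum_univ_eq_sum_range (fun i => y ↑i) m
    simp only [Fin.cast_val_eq_self] at this
    rw [hS_def]
    simpa [← this] using hy
  have hS0 : S 0 = 0 := by simp [hS_def]
  obtain ⟨k, hkmem, hkmin⟩ :=
    Finset.exists_min_image (Finset.range m) S ⟨0, Finset.mem_range.2 (by omega)⟩
  have hk : k < m := Finset.mem_range.1 hkmem
  refine ⟨k, hk, fun ℓ h1 h2 => ?_⟩
  have e : S (k + ℓ) = S k + ∑ i ∈ Finset.range ℓ, y ↑(k + i) := hshift k ℓ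
  by_cases h : k + ℓ < m
  · have := hkmin _ (Finset.mem_range.2 h)
    linarith
  · push_neg at h
    set t := k + ℓ - m with ht_def
    have htm : k + ℓ = m + t := by omega
    have htlt : t < m := by omega
    have e2 : S (m + t) = S m + S t := by
      rw [hshift]
      congr 1
      exact Finset.sum_congr rfl fun i _ => hf i
    have hkt : S k ≤ S t := hkmin _ (Finset.mem_range.2 htlt)
    rw [htm, e2] at e
    linarith

lemma joint_law {Ω : Type*} [MeasurableSpace Ω] (μ : Measure Ω) [IsProbabilityMeasure μ]
    (X : ℕ → Ω → ℝ) (hmeas : ∀ i, Measurable (X i))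
    (hindep : iIndepFun X μ)
    (hident : ∀ i, Measure.map (X i) μ = Measure.map (X 0) μ)
    (m : ℕ) [NeZero m] :
    μ.map (fun ω (i : Fin m) => X i ω) =
      Measure.pi (fun _ : Fin m => μ.map (X 0)) := by
  have hV : Measurable (fun ω (i : Fin m) => X i ω) :=
    measurable_pi_lambda _ (fun i => hmeas i)
  haveI : IsProbabilityMeasure (μ.map (X 0)) := Measure.isProbabilityMeasure_map (hmeas 0).aemeasurable
  refine (Measure.pi_eq fun s hs => ?_).symm
  rw [Measure.map_apply hV (MeasurableSet.univ_pi hs)]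
  have hpre : (fun ω (i : Fin m) => X i ω) ⁻¹' Set.pi Set.univ s =
      ⋂ n ∈ Finset.range m, X n ⁻¹' s ↑n := by
    ext ω
    simp only [Set.mem_preimage, Set.mem_pi, Set.mem_univ, forall_true_left,
      Set.mem_iInter, Finset.mem_range]
    constructor
    · intro h n hn
      have := h ↑n
      rwa [Fin.val_cast_of_lt hn] at this
    · intro h i
      have := h i i.isLt
      rwa [Fin.cast_val_eq_self] at this
  rw [hpre, hindep.meas_biInter (fun n _ => ⟨s ↑n, hs _, rfl⟩)]
  have key : ∀ n, μ (X n ⁻¹' s ↑n) = (μ.map (X 0)) (s ↑n) := by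
    intro n
    rw [← hident n, Measure.map_apply (hmeas n) (hs _)]
  calc ∏ n ∈ Finset.range m, μ (X n ⁻¹' s ↑n)
      = ∏ n ∈ Finset.range m, (μ.map (X 0)) (s ↑n) :=
        Finset.prod_congr rfl fun n _ => key n
    _ = ∏ i : Fin m, (μ.map (X 0)) (s i) := by
        rw [← Fin.prod_univ_eq_prod_range (fun n => (μ.map (X 0)) (s ↑n)) m]
        exact Finset.prod_congr rfl fun i _ => by rw [Fin.cast_val_eq_self]

lemma pi_rotation_invariant {m : ℕ} [NeZero m] (ν : Measure ℝ) [IsProbabilityMeasure ν]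
    (a : Fin m) :
    (Measure.pi (fun _ : Fin m => ν)).map (fun y j => y (j + a)) =
      Measure.pi (fun _ : Fin m => ν) := by
  have hσ : Measurable (fun (y : Fin m → ℝ) j => y (j + a)) :=
    measurable_pi_lambda _ (fun j => measurable_pi_apply (j + a))
  refine (Measure.pi_eq (μ := fun _ : Fin m => ν) fun s hs => ?_).symm
  rw [Measure.map_apply hσ (MeasurableSet.univ_pi hs)]
  have hpre : (fun (y : Fin m → ℝ) j => y (j + a)) ⁻¹' Set.pi Set.univ s =
      Set.pi Set.univ (fun j => s (j - a)) := by
    ext y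
    simp only [Set.mem_preimage, Set.mem_pi, Set.mem_univ, forall_true_left]
    constructor
    · intro h j
      have := h (j - a)
      rwa [sub_add_cancel] at this
    · intro h j
      have := h (j + a)
      rwa [add_sub_cancel_right] at this
  rw [hpre, Measure.pi_pi]
  exact Fintype.prod_equiv (Equiv.subRight a) _ _ fun j => rfl

/-- for i.i.d. real random variables with partial sums `S_ℓ`, for `m ≥ 1`
and `c > 0`, `P[S_m ≥ c, S_ℓ ≥ 0 ∀ ℓ = 1,…,m] ≥ (1/m) P[S_m ≥ c]`. -/
theorem stmt3 {Ω : Type*} [MeasurableSpace Ω] (μ : Measure Ω) [IsProbabilityMeasure μ]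
    (X : ℕ → Ω → ℝ) (hmeas : ∀ i, Measurable (X i))
    (hindep : iIndepFun X μ)
    (hident : ∀ i, Measure.map (X i) μ = Measure.map (X 0) μ)
    (m : ℕ) (hm : 1 ≤ m) (c : ℝ) (hc : 0 < c) :
    (m : ENNReal)⁻¹ * μ {ω | c ≤ ∑ i ∈ Finset.range m, X i ω} ≤
      μ {ω | c ≤ (∑ i ∈ Finset.range m, X i ω) ∧
              ∀ ℓ, 1 ≤ ℓ → ℓ ≤ m → 0 ≤ ∑ i ∈ Finset.range ℓ, X i ω} := by
  haveI : NeZero m := ⟨by omega⟩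
  set ν : Measure ℝ := μ.map (X 0) with hν
  haveI : IsProbabilityMeasure ν := Measure.isProbabilityMeasure_map (hmeas 0).aemeasurable
  set P : Measure (Fin m → ℝ) := Measure.pi (fun _ : Fin m => ν) with hP
  set V : Ω → (Fin m → ℝ) := fun ω (i : Fin m) => X i ω with hV_def
  have hV : Measurable V := measurable_pi_lambda _ (fun i => hmeas i)
  have hmap : μ.map V = P := joint_law μ X hmeas hindep hident m
  -- the key sets
  set C : Set (Fin m → ℝ) := {y | c ≤ ∑ i, y i} with hC_def
  have hC : MeasurableSet C :=
    measurableSet_le measurable_const (Finset.measurable_sum _ fun i _ => measurable_pi_apply i)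
  set B : ℕ → Set (Fin m → ℝ) := fun k =>
    C ∩ ⋂ ℓ ∈ Finset.Icc 1 m, {y | 0 ≤ ∑ i ∈ Finset.range ℓ, y ↑(k + i)} with hB_def
  have hB : ∀ k, MeasurableSet (B k) := by
    intro k
    refine hC.inter (MeasurableSet.biInter (Finset.Icc 1 m).countable_toSet fun ℓ _ => ?_)
    exact measurableSet_le measurable_const
      (Finset.measurable_sum _ fun i _ => measurable_pi_apply (↑(k + i) : Fin m))
  have hBmem : ∀ k y, y ∈ B k ↔
      (c ≤ ∑ i, y i ∧ ∀ ℓ, 1 ≤ ℓ → ℓ ≤ m → 0 ≤ ∑ i ∈ Finset.range ℓ, y ↑(k + i)) := by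
    intro k y
    simp [hB_def, hC_def, Set.mem_iInter, and_imp]
  -- rotation invariance of the measures of B k
  have hrot : ∀ k, B k = (fun (y : Fin m → ℝ) j => y (j + (k : Fin m))) ⁻¹' B 0 := by
    intro k
    ext y
    rw [Set.mem_preimage, hBmem, hBmem]
    have hsum : ∑ j : Fin m, y (j + (k : Fin m)) = ∑ j : Fin m, y j :=
      Fintype.sum_equiv (Equiv.addRight (k : Fin m)) _ _ fun j => rfl
    have hterm : ∀ i : ℕ, y ((↑(0 + i) : Fin m) + (k : Fin m)) = y ↑(k + i) := by
      intro i
      congr 1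
      simp [Nat.cast_add, add_comm]
    constructor
    · rintro ⟨h1, h2⟩
      refine ⟨by rwa [hsum], fun ℓ hℓ1 hℓ2 => ?_⟩
      have := h2 ℓ hℓ1 hℓ2
      rw [Finset.sum_congr rfl fun i _ => hterm i]
      exact this
    · rintro ⟨h1, h2⟩
      refine ⟨by rwa [hsum] at h1, fun ℓ hℓ1 hℓ2 => ?_⟩
      have := h2 ℓ hℓ1 hℓ2
      rwa [Finset.sum_congr rfl fun i _ => hterm i] at this
  have hPB : ∀ k, P (B k) = P (B 0) := by
    intro k
    have hσ : Measurable (fun (y : Fin m → ℝ) j => y (j + (k : Fin m))) :=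
      measurable_pi_lambda _ (fun j => measurable_pi_apply _)
    rw [hrot k, ← Measure.map_apply hσ (hB 0), hP, pi_rotation_invariant]
  -- cover C by the B k's
  have hcover : C ⊆ ⋃ k ∈ Finset.range m, B k := by
    intro y hy
    obtain ⟨k, hk, hall⟩ := cycle_lemma hm y hc hy
    exact Set.mem_biUnion (Finset.mem_range.2 hk) ((hBmem k y).2 ⟨hy, hall⟩)
  -- identify the two sets in Ω
  have hsumV : ∀ ω, ∑ i : Fin m, X (↑i) ω = ∑ i ∈ Finset.range m, X i ω :=
    fun ω => Fin.sum_univ_eq_sum_range (fun i => X i ω) m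
  have h1 : μ {ω | c ≤ ∑ i ∈ Finset.range m, X i ω} = P C := by
    rw [← hmap, Measure.map_apply hV hC]
    congr 1
    ext ω
    simp only [Set.mem_preimage, hC_def, Set.mem_setOf_eq, hV_def, hsumV ω]
  have h2 : μ {ω | c ≤ (∑ i ∈ Finset.range m, X i ω) ∧
      ∀ ℓ, 1 ≤ ℓ → ℓ ≤ m → 0 ≤ ∑ i ∈ Finset.range ℓ, X i ω} = P (B 0) := by
    rw [← hmap, Measure.map_apply hV (hB 0)]
    congr 1
    ext ω
    rw [Set.mem_preimage, hBmem]
    simp only [Set.mem_setOf_eq, hV_def, hsumV ω]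
    have hsum2 : ∀ ℓ, ℓ ≤ m →
        ∑ i ∈ Finset.range ℓ, V ω ↑(0 + i) = ∑ i ∈ Finset.range ℓ, X i ω := by
      intro ℓ hℓ
      refine Finset.sum_congr rfl fun i hi => ?_
      simp only [hV_def]
      congr 1
      rw [zero_add, Fin.val_cast_of_lt (lt_of_lt_of_le (Finset.mem_range.1 hi) hℓ)]
    constructor
    · rintro ⟨hA, hAll⟩
      exact ⟨hA, fun ℓ hℓ1 hℓ2 => by rw [hsum2 ℓ hℓ2]; exact hAll ℓ hℓ1 hℓ2⟩
    · rintro ⟨hA, hAll⟩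
      exact ⟨hA, fun ℓ hℓ1 hℓ2 => by rw [← hsum2 ℓ hℓ2]; exact hAll ℓ hℓ1 hℓ2⟩
  -- put it together
  have hcount : P C ≤ m * P (B 0) := by
    calc P C ≤ P (⋃ k ∈ Finset.range m, B k) := measure_mono hcover
      _ ≤ ∑ k ∈ Finset.range m, P (B k) := measure_biUnion_finset_le _ _
      _ = ∑ _k ∈ Finset.range m, P (B 0) := Finset.sum_congr rfl fun k _ => hPB k
      _ = m * P (B 0) := by simp [Finset.sum_const, mul_comm]
  rw [h1, h2]
  calc (m : ENNReal)⁻¹ * P C ≤ (m : ENNReal)⁻¹ * (m * P (B 0)) :=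
        mul_le_mul_right hcount _
    _ = P (B 0) := by
        rw [← mul_assoc, ENNReal.inv_mul_cancel (Nat.cast_ne_zero.2 (by omega)) (ENNReal.natCast_ne_top m), one_mul]
end

section
/- Variational identity for the annealed exponent: let ρ be a positive random variable, 0 < p < 1, and suppose κ_r > 0 satisfies E[ρ^{κ_r}] = 1/(1-p) and E[ρ^{κ_r} ln ρ] ∈ (0, ∞). Then for every h > 0, inf_{b>0} sup_{λ>0} { λ h − b · ln( (1-p) E[ρ^λ] ) } = κ_r · h. -/
open MeasureTheory

/-- variational identity for the annealed exponent: if `κ_r > 0` satisfies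
`E[ρ^{κ_r}] = 1/(1-p)` and `E[ρ^{κ_r} ln ρ] ∈ (0,∞)`, then for every `h > 0`,
`inf_{b>0} sup_{λ>0} { λh − b ln((1-p) E[ρ^λ]) } = κ_r h` (in the extended reals). -/
theorem stmt5 {Ω : Type*} [MeasurableSpace Ω] (μ : Measure Ω) [IsProbabilityMeasure μ]
    (ρ : Ω → ℝ) (hmeas : Measurable ρ) (hpos : ∀ ω, 0 < ρ ω)
    (p : ℝ) (hp0 : 0 < p) (hp1 : p < 1)
    (hint : ∀ l : ℝ, 0 ≤ l → Integrable (fun ω => ρ ω ^ l) μ)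
    (κr : ℝ) (hκr : 0 < κr)
    (hmom : (∫ ω, ρ ω ^ κr ∂μ) = 1 / (1 - p))
    (hderint : Integrable (fun ω => ρ ω ^ κr * Real.log (ρ ω)) μ)
    (hderpos : 0 < ∫ ω, ρ ω ^ κr * Real.log (ρ ω) ∂μ)
    (h : ℝ) (hh : 0 < h) :
    (⨅ (b : ℝ) (_ : 0 < b), ⨆ (l : ℝ) (_ : 0 < l),
        ((l * h - b * Real.log ((1 - p) * ∫ ω, ρ ω ^ l ∂μ) : ℝ) : EReal)) =
      ((κr * h : ℝ) : EReal) := by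
  have h1p : 0 < 1 - p := by linarith
  set D := ∫ ω, ρ ω ^ κr * Real.log (ρ ω) ∂μ with hD
  -- key convexity inequality
  have key : ∀ l : ℝ, 0 < l →
      (l - κr) * ((1 - p) * D) ≤ Real.log ((1 - p) * ∫ ω, ρ ω ^ l ∂μ) := by
    intro l hl
    set m := (l - κr) * ((1 - p) * D) with hm
    set g : Ω → ℝ := fun ω =>
      Real.exp m * ((1 - m) * ρ ω ^ κr + (l - κr) * (ρ ω ^ κr * Real.log (ρ ω))) with hg
    have hpt : ∀ ω, g ω ≤ ρ ω ^ l := by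
      intro ω
      have hρ := hpos ω
      have h1 : ρ ω ^ l = ρ ω ^ κr * Real.exp ((l - κr) * Real.log (ρ ω)) := by
        rw [Real.rpow_def_of_pos hρ, Real.rpow_def_of_pos hρ, ← Real.exp_add]
        ring_nf
      rw [h1]
      have h2 : ((l - κr) * Real.log (ρ ω) - m) + 1 ≤
          Real.exp ((l - κr) * Real.log (ρ ω) - m) := Real.add_one_le_exp _
      have h3 : Real.exp m * (((l - κr) * Real.log (ρ ω) - m) + 1)
          ≤ Real.exp m * Real.exp ((l - κr) * Real.log (ρ ω) - m) :=
        mul_le_mul_of_nonneg_left h2 (Real.exp_pos m).le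
      rw [← Real.exp_add] at h3
      have h4 : m + ((l - κr) * Real.log (ρ ω) - m) = (l - κr) * Real.log (ρ ω) := by ring
      rw [h4] at h3
      have h5 := mul_le_mul_of_nonneg_left h3 (Real.rpow_pos_of_pos hρ κr).le
      calc g ω = ρ ω ^ κr * (Real.exp m * (((l - κr) * Real.log (ρ ω) - m) + 1)) := by
            simp only [hg]; ring
        _ ≤ ρ ω ^ κr * Real.exp ((l - κr) * Real.log (ρ ω)) := h5
    have hκint := hint κr hκr.le
    have hgint : Integrable g μ := by
      have : Integrable (fun ω => (1 - m) * ρ ω ^ κr + (l - κr) * (ρ ω ^ κr * Real.log (ρ ω))) μ :=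
        (hκint.const_mul (1 - m)).add (hderint.const_mul (l - κr))
      exact this.const_mul (Real.exp m)
    have hmono : ∫ ω, g ω ∂μ ≤ ∫ ω, ρ ω ^ l ∂μ :=
      integral_mono hgint (hint l hl.le) hpt
    have hgval : ∫ ω, g ω ∂μ = Real.exp m * ((1 - m) * (1 / (1 - p)) + (l - κr) * D) := by
      rw [hg]
      rw [integral_const_mul]
      rw [integral_add (hκint.const_mul (1 - m)) (hderint.const_mul (l - κr))]
      rw [integral_const_mul, integral_const_mul, hmom]
    have hexp : Real.exp m ≤ (1 - p) * ∫ ω, ρ ω ^ l ∂μ := by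
      have h6 : (1 - p) * ∫ ω, g ω ∂μ = Real.exp m := by
        rw [hgval, hm]
        field_simp
        ring
      calc Real.exp m = (1 - p) * ∫ ω, g ω ∂μ := h6.symm
        _ ≤ (1 - p) * ∫ ω, ρ ω ^ l ∂μ := mul_le_mul_of_nonneg_left hmono h1p.le
    have hposint : 0 < (1 - p) * ∫ ω, ρ ω ^ l ∂μ := lt_of_lt_of_le (Real.exp_pos m) hexp
    exact (Real.le_log_iff_exp_le hposint).mpr hexp
  -- value at l = κr
  have hval : ∀ b : ℝ, (κr * h - b * Real.log ((1 - p) * ∫ ω, ρ ω ^ κr ∂μ) : ℝ) = κr * h := by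
    intro b
    rw [hmom]
    have : (1 - p) * (1 / (1 - p)) = 1 := by field_simp
    rw [this, Real.log_one, mul_zero, sub_zero]
  apply le_antisymm
  · -- upper bound: take b₀ = h / ((1-p) * D)
    set b₀ : ℝ := h / ((1 - p) * D) with hb₀
    have hDpos : 0 < (1 - p) * D := mul_pos h1p hderpos
    have hb₀pos : 0 < b₀ := div_pos hh hDpos
    refine iInf₂_le_of_le b₀ hb₀pos ?_
    refine iSup₂_le fun l hl => ?_
    rw [EReal.coe_le_coe_iff]
    have hk := key l hl
    have h7 : b₀ * ((l - κr) * ((1 - p) * D)) = (l - κr) * h := by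
      rw [hb₀]
      field_simp
    have h8 : (l - κr) * h ≤ b₀ * Real.log ((1 - p) * ∫ ω, ρ ω ^ l ∂μ) := by
      rw [← h7]
      exact mul_le_mul_of_nonneg_left hk hb₀pos.le
    linarith
  · -- lower bound: for each b, evaluate sup at l = κr
    refine le_iInf₂ fun b hb => ?_
    refine le_iSup₂_of_le κr hκr ?_
    rw [hval b]
end

section
/- Under the assumptions of the previous statement for both ρ and 1/ρ, with κ_ℓ > 0 satisfying E[ρ^{−κ_ℓ}] = 1/(1−p) and κ_r satisfying E[ρ^{κ_r}] = 1/(1−p), the function ψ̃(h) := inf_{b₁,b₂>0} { −(b₁+b₂) ln(1−p) + sup_{λ>0}{λh − b₂ ln E[ρ^λ]} + sup_{λ>0}{λh − b₁ ln E[ρ^{−λ}]} } satisfies ψ̃(h) = (κ_ℓ + κ_r) h for all h > 0. -/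
open MeasureTheory

lemma key_jensen {Ω : Type*} [MeasurableSpace Ω] (μ : Measure Ω) [IsProbabilityMeasure μ]
    (f : Ω → ℝ) (hpos : ∀ ω, 0 < f ω) (κ l : ℝ)
    (hintκ : Integrable (fun ω => f ω ^ κ) μ)
    (hintl : Integrable (fun ω => f ω ^ l) μ)
    (hder : Integrable (fun ω => f ω ^ κ * Real.log (f ω)) μ)
    (hM : 0 < ∫ ω, f ω ^ κ ∂μ) :
    Real.log (∫ ω, f ω ^ κ ∂μ) +
      (l - κ) * ((∫ ω, f ω ^ κ * Real.log (f ω) ∂μ) / (∫ ω, f ω ^ κ ∂μ)) ≤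
    Real.log (∫ ω, f ω ^ l ∂μ) := by
  set M : ℝ := ∫ ω, f ω ^ κ ∂μ with hMdef
  set I : ℝ := ∫ ω, f ω ^ κ * Real.log (f ω) ∂μ with hIdef
  set d : ℝ := I / M with hddef
  have hpt : ∀ ω, Real.exp ((l - κ) * d) *
      (f ω ^ κ + (l - κ) * (f ω ^ κ * Real.log (f ω) - d * f ω ^ κ)) ≤ f ω ^ l := by
    intro ω
    have hf := hpos ω
    set t := Real.log (f ω) with htdef
    rw [Real.rpow_def_of_pos hf l, Real.rpow_def_of_pos hf κ]
    have h1 : 1 + (l - κ) * (t - d) ≤ Real.exp ((l - κ) * (t - d)) := by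
      have := Real.add_one_le_exp ((l - κ) * (t - d)); linarith
    calc Real.exp ((l - κ) * d) *
          (Real.exp (t * κ) + (l - κ) * (Real.exp (t * κ) * t - d * Real.exp (t * κ)))
        = (Real.exp ((l - κ) * d) * Real.exp (t * κ)) * (1 + (l - κ) * (t - d)) := by ring
      _ ≤ (Real.exp ((l - κ) * d) * Real.exp (t * κ)) * Real.exp ((l - κ) * (t - d)) := by
          exact mul_le_mul_of_nonneg_left h1 (by positivity)
      _ = Real.exp ((l - κ) * d + t * κ + (l - κ) * (t - d)) := by
          rw [← Real.exp_add, ← Real.exp_add]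
      _ = Real.exp (t * l) := by congr 1; ring
  have hRint : Integrable (fun ω => Real.exp ((l - κ) * d) *
      (f ω ^ κ + (l - κ) * (f ω ^ κ * Real.log (f ω) - d * f ω ^ κ))) μ :=
    ((hintκ.add ((hder.sub (hintκ.const_mul d)).const_mul (l - κ))).const_mul _)
  have hmono := integral_mono hRint hintl hpt
  have hint1 : Integrable (fun ω => f ω ^ κ * Real.log (f ω) - d * f ω ^ κ) μ :=
    hder.sub (hintκ.const_mul d)
  have hint2 : Integrable (fun ω => (l - κ) * (f ω ^ κ * Real.log (f ω) - d * f ω ^ κ)) μ :=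
    hint1.const_mul (l - κ)
  have hval : (∫ ω, Real.exp ((l - κ) * d) *
      (f ω ^ κ + (l - κ) * (f ω ^ κ * Real.log (f ω) - d * f ω ^ κ)) ∂μ)
      = Real.exp ((l - κ) * d) * M := by
    rw [integral_const_mul _ _, integral_add hintκ hint2,
      integral_const_mul _ _, integral_sub hder (hintκ.const_mul d), integral_const_mul]
    have hdM : d * M = I := div_mul_cancel₀ I hM.ne'
    rw [← hMdef, ← hIdef, hdM]
    ring
  rw [hval] at hmono
  have hpos2 : 0 < Real.exp ((l - κ) * d) * M := by positivity
  have hlog : Real.log (Real.exp ((l - κ) * d) * M) ≤ Real.log (∫ ω, f ω ^ l ∂μ) := by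
    gcongr
  rw [Real.log_mul (Real.exp_pos _).ne' hM.ne', Real.log_exp] at hlog
  linarith

/-- with `κ_ℓ, κ_r > 0` satisfying `E[ρ^{−κ_ℓ}] = E[ρ^{κ_r}] = 1/(1−p)`
(together with positivity and finiteness of the corresponding logarithmic moments),
the rate function
`ψ̃(h) = inf_{b₁,b₂>0} { −(b₁+b₂)ln(1−p) + sup_{λ>0}{λh − b₂ ln E[ρ^λ]}
+ sup_{λ>0}{λh − b₁ ln E[ρ^{−λ}]} }` equals `(κ_ℓ + κ_r) h` for all `h > 0`. -/
theorem stmt6 {Ω : Type*} [MeasurableSpace Ω] (μ : Measure Ω) [IsProbabilityMeasure μ]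
    (ρ : Ω → ℝ) (hmeas : Measurable ρ) (hpos : ∀ ω, 0 < ρ ω)
    (p : ℝ) (hp0 : 0 < p) (hp1 : p < 1)
    (hintr : ∀ l : ℝ, 0 ≤ l → Integrable (fun ω => ρ ω ^ l) μ)
    (hintl : ∀ l : ℝ, 0 ≤ l → Integrable (fun ω => ρ ω ^ (-l)) μ)
    (κℓ κr : ℝ) (hκℓ : 0 < κℓ) (hκr : 0 < κr)
    (hmomr : (∫ ω, ρ ω ^ κr ∂μ) = 1 / (1 - p))
    (hmoml : (∫ ω, ρ ω ^ (-κℓ) ∂μ) = 1 / (1 - p))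
    (hderintr : Integrable (fun ω => ρ ω ^ κr * Real.log (ρ ω)) μ)
    (hderposr : 0 < ∫ ω, ρ ω ^ κr * Real.log (ρ ω) ∂μ)
    (hderintl : Integrable (fun ω => ρ ω ^ (-κℓ) * Real.log (1 / ρ ω)) μ)
    (hderposl : 0 < ∫ ω, ρ ω ^ (-κℓ) * Real.log (1 / ρ ω) ∂μ)
    (h : ℝ) (hh : 0 < h) :
    (⨅ (b₁ : ℝ) (_ : 0 < b₁), ⨅ (b₂ : ℝ) (_ : 0 < b₂),
        (((-(b₁ + b₂) * Real.log (1 - p) : ℝ) : EReal) +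
          (⨆ (l : ℝ) (_ : 0 < l),
            ((l * h - b₂ * Real.log (∫ ω, ρ ω ^ l ∂μ) : ℝ) : EReal)) +
          (⨆ (l : ℝ) (_ : 0 < l),
            ((l * h - b₁ * Real.log (∫ ω, ρ ω ^ (-l) ∂μ) : ℝ) : EReal)))) =
      (((κℓ + κr) * h : ℝ) : EReal) := by
  have h1p : (0:ℝ) < 1 - p := by linarith
  have hL : Real.log (1 / (1 - p)) = - Real.log (1 - p) := by rw [one_div, Real.log_inv]
  have hMr : (0:ℝ) < ∫ ω, ρ ω ^ κr ∂μ := by rw [hmomr]; exact div_pos one_pos h1p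
  have hMl : (0:ℝ) < ∫ ω, ρ ω ^ (-κℓ) ∂μ := by rw [hmoml]; exact div_pos one_pos h1p
  -- inverse function setup
  have hiconv : ∀ l : ℝ, (fun ω => (ρ ω)⁻¹ ^ l) = (fun ω => ρ ω ^ (-l)) := by
    intro l; funext ω
    rw [Real.inv_rpow (hpos ω).le, ← Real.rpow_neg (hpos ω).le]
  have hlogconv : (fun ω => (ρ ω)⁻¹ ^ κℓ * Real.log ((ρ ω)⁻¹))
      = (fun ω => ρ ω ^ (-κℓ) * Real.log (1 / ρ ω)) := by
    funext ω
    rw [Real.inv_rpow (hpos ω).le, ← Real.rpow_neg (hpos ω).le, one_div]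
  have hintl' : ∀ l : ℝ, 0 ≤ l → Integrable (fun ω => (ρ ω)⁻¹ ^ l) μ := by
    intro l hl; rw [hiconv l]; exact hintl l hl
  -- tilted derivatives
  set dr : ℝ := (∫ ω, ρ ω ^ κr * Real.log (ρ ω) ∂μ) / (∫ ω, ρ ω ^ κr ∂μ) with hdrdef
  have hdrpos : 0 < dr := div_pos hderposr hMr
  set dl : ℝ := (∫ ω, ρ ω ^ (-κℓ) * Real.log (1 / ρ ω) ∂μ) / (∫ ω, ρ ω ^ (-κℓ) ∂μ) with hdldef
  have hdlpos : 0 < dl := div_pos hderposl hMl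
  have keyr : ∀ l : ℝ, 0 < l →
      Real.log (∫ ω, ρ ω ^ κr ∂μ) + (l - κr) * dr ≤ Real.log (∫ ω, ρ ω ^ l ∂μ) := fun l hl =>
    key_jensen μ ρ hpos κr l (hintr κr hκr.le) (hintr l hl.le) hderintr hMr
  have keyl : ∀ l : ℝ, 0 < l →
      Real.log (∫ ω, ρ ω ^ (-κℓ) ∂μ) + (l - κℓ) * dl ≤ Real.log (∫ ω, ρ ω ^ (-l) ∂μ) := by
    intro l hl
    have := key_jensen μ (fun ω => (ρ ω)⁻¹) (fun ω => inv_pos.2 (hpos ω)) κℓ l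
      (hintl' κℓ hκℓ.le) (hintl' l hl.le) (by rw [hlogconv]; exact hderintl)
      (by rw [hiconv κℓ]; exact hMl)
    rwa [hiconv κℓ, hiconv l, hlogconv] at this
  -- optimal b's
  set b₂ : ℝ := h / dr with hb2def
  have hb₂ : 0 < b₂ := div_pos hh hdrpos
  have hb2dr : b₂ * dr = h := div_mul_cancel₀ h hdrpos.ne'
  set b₁ : ℝ := h / dl with hb1def
  have hb₁ : 0 < b₁ := div_pos hh hdlpos
  have hb1dl : b₁ * dl = h := div_mul_cancel₀ h hdlpos.ne'
  -- sup equalities at the optimal b's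
  have supr : (⨆ (l : ℝ) (_ : 0 < l),
      ((l * h - b₂ * Real.log (∫ ω, ρ ω ^ l ∂μ) : ℝ) : EReal))
      = ((κr * h - b₂ * Real.log (∫ ω, ρ ω ^ κr ∂μ) : ℝ) : EReal) := by
    apply le_antisymm
    · refine iSup₂_le fun l hl => ?_
      rw [EReal.coe_le_coe_iff]
      have hk := mul_le_mul_of_nonneg_left (keyr l hl) hb₂.le
      nlinarith [hk, hb2dr]
    · exact le_iSup₂ (f := fun (l : ℝ) (_ : 0 < l) =>
        ((l * h - b₂ * Real.log (∫ ω, ρ ω ^ l ∂μ) : ℝ) : EReal)) κr hκr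
  have supl : (⨆ (l : ℝ) (_ : 0 < l),
      ((l * h - b₁ * Real.log (∫ ω, ρ ω ^ (-l) ∂μ) : ℝ) : EReal))
      = ((κℓ * h - b₁ * Real.log (∫ ω, ρ ω ^ (-κℓ) ∂μ) : ℝ) : EReal) := by
    apply le_antisymm
    · refine iSup₂_le fun l hl => ?_
      rw [EReal.coe_le_coe_iff]
      have hk := mul_le_mul_of_nonneg_left (keyl l hl) hb₁.le
      nlinarith [hk, hb1dl]
    · exact le_iSup₂ (f := fun (l : ℝ) (_ : 0 < l) =>
        ((l * h - b₁ * Real.log (∫ ω, ρ ω ^ (-l) ∂μ) : ℝ) : EReal)) κℓ hκℓ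
  apply le_antisymm
  · refine le_trans (iInf₂_le b₁ hb₁) (le_trans (iInf₂_le b₂ hb₂) ?_)
    rw [supr, supl, hmomr, hmoml, ← EReal.coe_add, ← EReal.coe_add, EReal.coe_le_coe_iff, hL]
    apply le_of_eq; ring
  · refine le_iInf₂ fun b₁' hb₁' => le_iInf₂ fun b₂' hb₂' => ?_
    have s1 : ((κr * h - b₂' * Real.log (∫ ω, ρ ω ^ κr ∂μ) : ℝ) : EReal) ≤
        ⨆ (l : ℝ) (_ : 0 < l), ((l * h - b₂' * Real.log (∫ ω, ρ ω ^ l ∂μ) : ℝ) : EReal) :=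
      le_iSup₂ (f := fun (l : ℝ) (_ : 0 < l) =>
        ((l * h - b₂' * Real.log (∫ ω, ρ ω ^ l ∂μ) : ℝ) : EReal)) κr hκr
    have s2 : ((κℓ * h - b₁' * Real.log (∫ ω, ρ ω ^ (-κℓ) ∂μ) : ℝ) : EReal) ≤
        ⨆ (l : ℝ) (_ : 0 < l), ((l * h - b₁' * Real.log (∫ ω, ρ ω ^ (-l) ∂μ) : ℝ) : EReal) :=
      le_iSup₂ (f := fun (l : ℝ) (_ : 0 < l) =>
        ((l * h - b₁' * Real.log (∫ ω, ρ ω ^ (-l) ∂μ) : ℝ) : EReal)) κℓ hκℓ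
    calc (((κℓ + κr) * h : ℝ) : EReal)
        = ((-(b₁' + b₂') * Real.log (1 - p) : ℝ) : EReal) +
          ((κr * h - b₂' * Real.log (∫ ω, ρ ω ^ κr ∂μ) : ℝ) : EReal) +
          ((κℓ * h - b₁' * Real.log (∫ ω, ρ ω ^ (-κℓ) ∂μ) : ℝ) : EReal) := by
          rw [hmomr, hmoml, ← EReal.coe_add, ← EReal.coe_add, EReal.coe_eq_coe_iff, hL]; ring
      _ ≤ _ := add_le_add (add_le_add le_rfl s1) s2
end
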